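/- Let α ∈ T_n be an idempotent of rank l and let β, γ ∈ T_n both have stable rank l in (T_n, *_α). Then β * γ also has stable rank l, the stable kernel of β*γ equals the stable kernel of β, and the stable image of β*γ equals the stable image of γ. In particular, the set T_n^{(l)} of elements of stable rank l is a subsemigroup of (T_n, *_α). -/

import Mathlib

/-- The sandwich multiplication `β *_α γ = βαγ` (left-to-right composition). -/
def vmul {n : ℕ} (α β γ : Fin n → Fin n) : Fin n → Fin n :=
  fun x => γ (α (β x))

/-- `vpow α β m = β^{*(m+1)}`, the positive `*_α`-powers of `β`. -/
def vpow {n : ℕ} (α β : Fin n → Fin n) : ℕ → (Fin n → Fin n)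
  | 0 => β
  | m + 1 => vmul α (vpow α β m) β

/-- The rank of a transformation: the cardinality of its image. -/
def rank {n : ℕ} (f : Fin n → Fin n) : ℕ := (Finset.image f Finset.univ).card

open Finset

private lemma vmul_assoc {n : ℕ} (α f g h : Fin n → Fin n) :
    vmul α (vmul α f g) h = vmul α f (vmul α g h) := rfl

private lemma vpow_add {n : ℕ} (α β : Fin n → Fin n) (a b : ℕ) :
    vmul α (vpow α β a) (vpow α β b) = vpow α β (a + b + 1) := by
  induction b with
  | zero => rfl
  | succ b ih =>
    show vmul α (vpow α β a) (vmul α (vpow α β b) β) = _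
    rw [← vmul_assoc, ih]
    rfl

private lemma vpow_succ_left {n : ℕ} (α β : Fin n → Fin n) (m : ℕ) :
    vpow α β (m + 1) = vmul α β (vpow α β m) := by
  simpa [vpow.eq_1] using (vpow_add α β 0 m).symm

private lemma image_vpow_succ {n : ℕ} (α β : Fin n → Fin n) (m : ℕ) :
    image (vpow α β (m+1)) univ
      = image (fun y => β (α y)) (image (vpow α β m) univ) := by
  rw [image_image]; rfl

private lemma rank_vpow_anti {n : ℕ} (α β : Fin n → Fin n) {m m' : ℕ} (h : m ≤ m') :
    rank (vpow α β m') ≤ rank (vpow α β m) := by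
  induction m', h using Nat.le_induction with
  | base => exact le_rfl
  | succ k hk ih =>
    refine le_trans ?_ ih
    show rank (vpow α β (k+1)) ≤ rank (vpow α β k)
    rw [rank, image_vpow_succ]
    exact card_image_le

private lemma key {n l : ℕ} (α φ : Fin n → Fin n) (hl : rank α = l)
    (hφ : ∃ M : ℕ, ∀ m ≥ M, rank (vpow α φ m) = l) :
    Set.InjOn φ ↑(image α univ) ∧
      image (fun x => α (φ x)) (image α univ) = image α univ ∧
      image (fun x => α (φ x)) univ = image α univ := by
  obtain ⟨M, hM⟩ := hφ
  set A : Finset (Fin n) := image α univ with hAdef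
  have hcardA : A.card = l := hl
  -- rank of vpow 1 is l
  have h1ge : l ≤ rank (vpow α φ 1) := by
    have h := hM (max M 1) (le_max_left _ _)
    exact h ▸ rank_vpow_anti α φ (le_max_right M 1)
  have hBsub : image (vpow α φ 1) univ ⊆ image φ A := by
    intro z hz
    simp only [mem_image, mem_univ, true_and] at hz ⊢
    obtain ⟨x, rfl⟩ := hz
    exact ⟨α (φ x), mem_image_of_mem α (mem_univ _), rfl⟩
  have hcardB_le : (image φ A).card ≤ l := hcardA ▸ card_image_le
  have hcardB : (image φ A).card = l :=
    le_antisymm hcardB_le (le_trans h1ge (card_le_card hBsub))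
  have hinj : Set.InjOn φ ↑A :=
    injOn_of_card_image_eq (by rw [hcardB, hcardA])
  -- the set C
  have h2ge : l ≤ rank (vpow α φ 2) := by
    have h := hM (max M 2) (le_max_left _ _)
    exact h ▸ rank_vpow_anti α φ (le_max_right M 2)
  have hCsub : image (fun x => α (φ x)) A ⊆ A := by
    intro z hz
    simp only [mem_image, mem_univ, true_and] at hz
    obtain ⟨a, _, rfl⟩ := hz
    exact mem_image_of_mem α (mem_univ _)
  have hsub2 : image (vpow α φ 2) univ ⊆ image φ (image (fun x => α (φ x)) A) := by
    intro z hz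
    simp only [mem_image, mem_univ, true_and] at hz ⊢
    obtain ⟨x, rfl⟩ := hz
    exact ⟨α (φ (α (φ x))), ⟨α (φ x), mem_image_of_mem α (mem_univ _), rfl⟩, rfl⟩
  have hcardC : (image (fun x => α (φ x)) A).card = l := by
    refine le_antisymm (le_trans (card_le_card hCsub) hcardA.le) ?_
    exact le_trans h2ge (le_trans (card_le_card hsub2) card_image_le)
  have hCA : image (fun x => α (φ x)) A = A :=
    eq_of_subset_of_card_le hCsub (by rw [hcardC, hcardA])
  refine ⟨hinj, hCA, ?_⟩
  refine Subset.antisymm ?_ ?_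
  · intro z hz
    simp only [mem_image, mem_univ, true_and] at hz
    obtain ⟨x, rfl⟩ := hz
    exact mem_image_of_mem α (mem_univ _)
  · calc A = image (fun x => α (φ x)) A := hCA.symm
      _ ⊆ image (fun x => α (φ x)) univ := image_subset_image (subset_univ A)

private lemma ker_lemma {n : ℕ} (α φ : Fin n → Fin n) (m : ℕ)
    (hid : vmul α (vpow α φ m) (vpow α φ m) = vpow α φ m)
    (hA : image (fun x => α (φ x)) (image α univ) = image α univ) (x y : Fin n) :
    vpow α φ m x = vpow α φ m y ↔ α (φ x) = α (φ y) := by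
  set h : Fin n → Fin n := fun z => α (φ z) with hh
  set A : Finset (Fin n) := image α univ with hAdef
  have hmem : ∀ z : Fin n, h z ∈ (↑A : Set (Fin n)) := by
    intro z
    exact Finset.mem_coe.mpr (mem_image_of_mem α (mem_univ (φ z)))
  have hinj : Set.InjOn h ↑A := injOn_of_card_image_eq (by rw [hA])
  have hiter : ∀ k, Set.InjOn (h^[k]) ↑A := by
    intro k
    induction k with
    | zero => simpa using Set.injOn_id _
    | succ k ih =>
      intro a ha b hb hab
      rw [Function.iterate_succ_apply, Function.iterate_succ_apply] at hab
      exact hinj ha hb (ih (hmem a) (hmem b) hab)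
  have hαpow : ∀ k x, α (vpow α φ k x) = h^[k+1] x := by
    intro k
    induction k with
    | zero => intro x; rfl
    | succ k ih =>
      intro x
      show α (φ (α (vpow α φ k x))) = h^[k+1+1] x
      rw [ih x]
      exact (Function.iterate_succ_apply' h (k+1) x).symm
  constructor
  · intro he
    have h1 : h^[m+1] x = h^[m+1] y := by rw [← hαpow, ← hαpow, he]
    rw [Function.iterate_succ_apply, Function.iterate_succ_apply] at h1
    exact hiter m (hmem x) (hmem y) h1
  · intro he
    have h2 : vpow α φ m = vpow α φ (m + m + 1) := by rw [← vpow_add, hid]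
    rw [h2, vpow_succ_left]
    exact congrArg (vpow α φ (m+m)) he

private lemma range_eq_of_image_eq {n : ℕ} (f g : Fin n → Fin n)
    (h : image f univ = image g univ) : Set.range f = Set.range g := by
  rw [← Set.image_univ, ← Set.image_univ, ← coe_univ, ← coe_image, ← coe_image, h]

/-- If `β, γ` both have stable rank `l = rank α` in `(T_n, *_α)`, then so does
`β * γ`; moreover the stable kernel of `β*γ` equals that of `β` and the stable
image of `β*γ` equals that of `γ` (kernels and images of the idempotent powers).
In particular the elements of stable rank `l` form a subsemigroup. -/
theorem stable_rank_top_subsemigroup {n l : ℕ} (α : Fin n → Fin n)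
    (hα : ∀ x, α (α x) = α x) (hl : rank α = l) (β γ : Fin n → Fin n)
    (hβ : ∃ M : ℕ, ∀ m ≥ M, rank (vpow α β m) = l)
    (hγ : ∃ M : ℕ, ∀ m ≥ M, rank (vpow α γ m) = l) :
    (∃ M : ℕ, ∀ m ≥ M, rank (vpow α (vmul α β γ) m) = l) ∧
    (∀ m₁ m₂ m₃ : ℕ,
      vmul α (vpow α β m₁) (vpow α β m₁) = vpow α β m₁ →
      vmul α (vpow α γ m₂) (vpow α γ m₂) = vpow α γ m₂ →
      vmul α (vpow α (vmul α β γ) m₃) (vpow α (vmul α β γ) m₃) =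
        vpow α (vmul α β γ) m₃ →
      (∀ x y : Fin n,
        vpow α (vmul α β γ) m₃ x = vpow α (vmul α β γ) m₃ y ↔
          vpow α β m₁ x = vpow α β m₁ y) ∧
      Set.range (vpow α (vmul α β γ) m₃) = Set.range (vpow α γ m₂)) := by
  obtain ⟨hinjβ, hAβ, hsurjβ⟩ := key α β hl hβ
  obtain ⟨hinjγ, hAγ, hsurjγ⟩ := key α γ hl hγ
  set A : Finset (Fin n) := image α univ with hAdef
  have hcardA : A.card = l := hl
  -- image of every *-power of δ = βγ is γ(A)
  have himδ : ∀ m, image (vpow α (vmul α β γ) m) univ = image γ A := by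
    intro m
    induction m with
    | zero =>
      show image (vmul α β γ) univ = image γ A
      calc image (vmul α β γ) univ
          = image γ (image (fun x => α (β x)) univ) := by
            rw [image_image]; rfl
        _ = image γ A := by rw [hsurjβ]
    | succ m ih =>
      calc image (vpow α (vmul α β γ) (m+1)) univ
          = image (fun y => vmul α β γ (α y)) (image (vpow α (vmul α β γ) m) univ) :=
            image_vpow_succ α (vmul α β γ) m
        _ = image (fun y => vmul α β γ (α y)) (image γ A) := by rw [ih]
        _ = image γ (image (fun z => α (β z)) (image (fun x => α (γ x)) A)) := by
            simp only [image_image]; rfl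
        _ = image γ A := by rw [hAγ, hAβ]
  -- image of positive *-powers of γ is γ(A)
  have himγ : ∀ m, image (vpow α γ (m+1)) univ = image γ A := by
    intro m
    induction m with
    | zero =>
      calc image (vpow α γ 1) univ
          = image γ (image (fun x => α (γ x)) univ) := by rw [image_image]; rfl
        _ = image γ A := by rw [hsurjγ]
    | succ m ih =>
      calc image (vpow α γ (m+1+1)) univ
          = image (fun y => γ (α y)) (image (vpow α γ (m+1)) univ) :=
            image_vpow_succ α γ (m+1)
        _ = image (fun y => γ (α y)) (image γ A) := by rw [ih]
        _ = image γ (image (fun x => α (γ x)) A) := by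
            simp only [image_image]; rfl
        _ = image γ A := by rw [hAγ]
  constructor
  · refine ⟨0, fun m _ => ?_⟩
    rw [rank, himδ m, card_image_of_injOn hinjγ, hcardA]
  · intro m₁ m₂ m₃ hid1 hid2 hid3
    have hAδ : image (fun x => α (vmul α β γ x)) A = A := by
      calc image (fun x => α (vmul α β γ x)) A
          = image (fun z => α (γ z)) (image (fun x => α (β x)) A) := by
            simp only [image_image]; rfl
        _ = A := by rw [hAβ, hAγ]
    have hinjαγ : Set.InjOn (fun z => α (γ z)) ↑A :=
      injOn_of_card_image_eq (by rw [hAγ])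
    constructor
    · intro x y
      rw [ker_lemma α (vmul α β γ) m₃ hid3 hAδ x y, ker_lemma α β m₁ hid1 hAβ x y]
      constructor
      · intro h
        have hx : α (β x) ∈ (↑A : Set (Fin n)) :=
          Finset.mem_coe.mpr (mem_image_of_mem α (mem_univ (β x)))
        have hy : α (β y) ∈ (↑A : Set (Fin n)) :=
          Finset.mem_coe.mpr (mem_image_of_mem α (mem_univ (β y)))
        exact hinjαγ hx hy h
      · intro h
        show α (γ (α (β x))) = α (γ (α (β y)))
        rw [h]
    · have h2 : vpow α γ m₂ = vpow α γ (m₂ + m₂ + 1) := by rw [← vpow_add, hid2]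
      refine range_eq_of_image_eq _ _ ?_
      rw [himδ m₃, h2, himγ (m₂ + m₂)]
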